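/- Let $N\geq 4$ be an even integer and for odd $n_1,n_2\geq 1$ with $n_1+n_2=N$ and odd $2n+1$ with $1\leq 2n+1\leq N-3$, set $s=N-2n-2$ and define $c(n_1,n_2;2n+1) = \binom{2n}{n_1-1} - \binom{2n}{n_2-1} + \delta_{2n,n_1-1}(1-2^{2n+1})$, where $\delta$ is the Kronecker delta and $\binom{a}{b}=0$ if $b>a$ or $b<0$. Then for each fixed odd $2n+1$ with $3\leq 2n+1\leq N-3$, $\left|c(2n+1, N-2n-1; 2n+1)\right| > \sum_{\substack{n_1\ \mathrm{odd},\ 3\leq n_1\leq N-3 \\ n_1\neq 2n+1}} \left|c(n_1, N-n_1; 2n+1)\right|$. -/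

import Mathlib

/-- Entry `c(n₁, n₂; 2n+1) = C(2n, n₁-1) - C(2n, n₂-1) + δ_{2n, n₁-1}(1 - 2^{2n+1})`. -/
def cEntry (n₁ n₂ n : ℕ) : ℤ :=
  (Nat.choose (2 * n) (n₁ - 1) : ℤ) - (Nat.choose (2 * n) (n₂ - 1) : ℤ)
    + (if 2 * n = n₁ - 1 then 1 - 2 ^ (2 * n + 1) else 0)

lemma even_sum_choose (n : ℕ) (hn : 1 ≤ n) :
    ∑ k ∈ (Finset.range (2 * n + 1)).filter (fun k => Even k),
      ((2 * n).choose k : ℤ) = 2 ^ (2 * n - 1) := by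
  have h1 : ∑ k ∈ Finset.range (2 * n + 1), ((2 * n).choose k : ℤ) = 2 ^ (2 * n) := by
    have := Nat.sum_range_choose (2 * n)
    exact_mod_cast congrArg (Nat.cast (R := ℤ)) this
  have h2 : ∑ k ∈ Finset.range (2 * n + 1), (-1 : ℤ) ^ k * ((2 * n).choose k : ℤ) = 0 := by
    rw [Int.alternating_sum_range_choose, if_neg (by omega)]
  have hsplit1 := Finset.sum_filter_add_sum_filter_not (Finset.range (2 * n + 1))
    (fun k => Even k) (fun k => ((2 * n).choose k : ℤ))
  have hsplit2 := Finset.sum_filter_add_sum_filter_not (Finset.range (2 * n + 1))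
    (fun k => Even k) (fun k => (-1 : ℤ) ^ k * ((2 * n).choose k : ℤ))
  have hE : ∑ k ∈ (Finset.range (2 * n + 1)).filter (fun k => Even k),
      (-1 : ℤ) ^ k * ((2 * n).choose k : ℤ)
      = ∑ k ∈ (Finset.range (2 * n + 1)).filter (fun k => Even k),
        ((2 * n).choose k : ℤ) := by
    refine Finset.sum_congr rfl fun k hk => ?_
    have hk' := (Finset.mem_filter.mp hk).2
    rw [hk'.neg_one_pow, one_mul]
  have hO : ∑ k ∈ (Finset.range (2 * n + 1)).filter (fun k => ¬ Even k),
      (-1 : ℤ) ^ k * ((2 * n).choose k : ℤ)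
      = - ∑ k ∈ (Finset.range (2 * n + 1)).filter (fun k => ¬ Even k),
        ((2 * n).choose k : ℤ) := by
    rw [← Finset.sum_neg_distrib]
    refine Finset.sum_congr rfl fun k hk => ?_
    have hk' := (Finset.mem_filter.mp hk).2
    rw [(Nat.not_even_iff_odd.mp hk').neg_one_pow]; ring
  rw [hE, hO] at hsplit2
  have hpow : (2 : ℤ) ^ (2 * n) = 2 * 2 ^ (2 * n - 1) := by
    rw [← pow_succ']
    congr 1
    omega
  rw [h1] at hsplit1
  rw [h2] at hsplit2
  linarith

lemma even_sum_choose_big (n M : ℕ) (hn : 1 ≤ n) (hM : 2 * n + 1 ≤ M) :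
    ∑ k ∈ (Finset.range M).filter (fun k => Even k),
      ((2 * n).choose k : ℤ) = 2 ^ (2 * n - 1) := by
  rw [← even_sum_choose n hn]
  symm
  refine Finset.sum_subset ?_ ?_
  · exact Finset.filter_subset_filter _ (Finset.range_subset_range.mpr hM)
  · intro x hx hx'
    simp only [Finset.mem_filter, Finset.mem_range] at hx hx'
    have : 2 * n < x := by
      by_contra h
      exact hx' ⟨by omega, hx.2⟩
    rw [Nat.choose_eq_zero_of_lt this, Nat.cast_zero]

theorem stmt_17 (N : ℕ) (hN : 4 ≤ N) (hNeven : Even N) (n : ℕ)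
    (h1 : 3 ≤ 2 * n + 1) (h2 : 2 * n + 1 ≤ N - 3) :
    ∑ n₁ ∈ (Finset.Icc 3 (N - 3)).filter (fun n₁ => Odd n₁ ∧ n₁ ≠ 2 * n + 1),
        |cEntry n₁ (N - n₁) n|
      < |cEntry (2 * n + 1) (N - (2 * n + 1)) n| := by
  obtain ⟨p, hp⟩ := hNeven
  have hn : 1 ≤ n := by omega
  have hN' : 2 * n + 4 ≤ N := by omega
  set T := (Finset.Icc 3 (N - 3)).filter (fun n₁ => Odd n₁ ∧ n₁ ≠ 2 * n + 1) with hT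
  -- the diagonal value
  have h8 : (8 : ℤ) ≤ 2 ^ (2 * n + 1) := by
    calc (8 : ℤ) = 2 ^ 3 := by norm_num
    _ ≤ 2 ^ (2 * n + 1) := pow_le_pow_right₀ (by norm_num) (by omega)
  have hC : (0 : ℤ) ≤ ((2 * n).choose (N - 2 * n - 2) : ℤ) := Int.natCast_nonneg _
  have hdiag : cEntry (2 * n + 1) (N - (2 * n + 1)) n
      = 2 - ((2 * n).choose (N - 2 * n - 2) : ℤ) - 2 ^ (2 * n + 1) := by
    unfold cEntry
    rw [if_pos (by omega)]
    have e1 : 2 * n + 1 - 1 = 2 * n := by omega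
    have e2 : N - (2 * n + 1) - 1 = N - 2 * n - 2 := by omega
    rw [e1, e2, Nat.choose_self, Nat.cast_one]
    ring
  have habs : |cEntry (2 * n + 1) (N - (2 * n + 1)) n|
      = 2 ^ (2 * n + 1) + ((2 * n).choose (N - 2 * n - 2) : ℤ) - 2 := by
    rw [hdiag, abs_of_nonpos (by linarith)]
    ring
  -- bound each off-diagonal term
  have hstep : ∀ n₁ ∈ T, |cEntry n₁ (N - n₁) n|
      ≤ ((2 * n).choose (n₁ - 1) : ℤ) + ((2 * n).choose (N - n₁ - 1) : ℤ) := by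
    intro n₁ hn₁
    simp only [hT, Finset.mem_filter, Finset.mem_Icc] at hn₁
    obtain ⟨⟨h3, h4⟩, hodd, hne⟩ := hn₁
    unfold cEntry
    rw [if_neg (by omega), add_zero]
    have ha : (0 : ℤ) ≤ ((2 * n).choose (n₁ - 1) : ℤ) := Int.natCast_nonneg _
    have hb : (0 : ℤ) ≤ ((2 * n).choose (N - n₁ - 1) : ℤ) := Int.natCast_nonneg _
    rw [abs_le]
    constructor <;> linarith
  have hsum : ∑ n₁ ∈ T, |cEntry n₁ (N - n₁) n|
      ≤ ∑ n₁ ∈ T, (((2 * n).choose (n₁ - 1) : ℤ) + ((2 * n).choose (N - n₁ - 1) : ℤ)) :=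
    Finset.sum_le_sum hstep
  rw [Finset.sum_add_distrib] at hsum
  -- bound the first reindexed sum
  have hinjA : ∀ x ∈ T, ∀ y ∈ T, x - 1 = y - 1 → x = y := by
    intro x hx y hy hxy
    simp only [hT, Finset.mem_filter, Finset.mem_Icc] at hx hy
    omega
  have hA : ∑ n₁ ∈ T, ((2 * n).choose (n₁ - 1) : ℤ)
      ≤ ∑ k ∈ ((Finset.range N).filter (fun k => Even k)).erase (2 * n),
        ((2 * n).choose k : ℤ) := by
    calc ∑ n₁ ∈ T, ((2 * n).choose (n₁ - 1) : ℤ)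
        = ∑ k ∈ T.image (fun n₁ => n₁ - 1), ((2 * n).choose k : ℤ) :=
          (Finset.sum_image (f := fun k => ((2 * n).choose k : ℤ)) hinjA).symm
      _ ≤ _ := ?_
    refine Finset.sum_le_sum_of_subset_of_nonneg ?_ fun k _ _ => Int.natCast_nonneg _
    intro k hk
    simp only [Finset.mem_image, hT, Finset.mem_filter, Finset.mem_Icc] at hk
    obtain ⟨n₁, ⟨⟨h3, h4⟩, hodd, hne⟩, rfl⟩ := hk
    obtain ⟨j, hj⟩ := hodd
    simp only [Finset.mem_erase, Finset.mem_filter, Finset.mem_range]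
    refine ⟨by omega, by omega, ⟨j, by omega⟩⟩
  -- bound the second reindexed sum
  have hinjB : ∀ x ∈ T, ∀ y ∈ T, N - x - 1 = N - y - 1 → x = y := by
    intro x hx y hy hxy
    simp only [hT, Finset.mem_filter, Finset.mem_Icc] at hx hy
    omega
  have hB : ∑ n₁ ∈ T, ((2 * n).choose (N - n₁ - 1) : ℤ)
      ≤ ∑ k ∈ ((Finset.range N).filter (fun k => Even k)).erase (N - 2 * n - 2),
        ((2 * n).choose k : ℤ) := by
    calc ∑ n₁ ∈ T, ((2 * n).choose (N - n₁ - 1) : ℤ)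
        = ∑ k ∈ T.image (fun n₁ => N - n₁ - 1), ((2 * n).choose k : ℤ) :=
          (Finset.sum_image (f := fun k => ((2 * n).choose k : ℤ)) hinjB).symm
      _ ≤ _ := ?_
    refine Finset.sum_le_sum_of_subset_of_nonneg ?_ fun k _ _ => Int.natCast_nonneg _
    intro k hk
    simp only [Finset.mem_image, hT, Finset.mem_filter, Finset.mem_Icc] at hk
    obtain ⟨n₁, ⟨⟨h3, h4⟩, hodd, hne⟩, rfl⟩ := hk
    obtain ⟨j, hj⟩ := hodd
    simp only [Finset.mem_erase, Finset.mem_filter, Finset.mem_range]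
    refine ⟨by omega, by omega, ⟨p - j - 1, by omega⟩⟩
  -- evaluate the two erased sums
  have hmem1 : 2 * n ∈ (Finset.range N).filter (fun k => Even k) := by
    simp only [Finset.mem_filter, Finset.mem_range]
    exact ⟨by omega, ⟨n, by omega⟩⟩
  have hmem2 : N - 2 * n - 2 ∈ (Finset.range N).filter (fun k => Even k) := by
    simp only [Finset.mem_filter, Finset.mem_range]
    exact ⟨by omega, ⟨p - n - 1, by omega⟩⟩
  have hval1 : ∑ k ∈ ((Finset.range N).filter (fun k => Even k)).erase (2 * n),
      ((2 * n).choose k : ℤ) = 2 ^ (2 * n - 1) - 1 := by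
    rw [Finset.sum_erase_eq_sub hmem1, even_sum_choose_big n N hn (by omega),
      Nat.choose_self, Nat.cast_one]
  have hval2 : ∑ k ∈ ((Finset.range N).filter (fun k => Even k)).erase (N - 2 * n - 2),
      ((2 * n).choose k : ℤ) = 2 ^ (2 * n - 1) - ((2 * n).choose (N - 2 * n - 2) : ℤ) := by
    rw [Finset.sum_erase_eq_sub hmem2, even_sum_choose_big n N hn (by omega)]
  rw [hval1] at hA
  rw [hval2] at hB
  rw [habs]
  have hpow1 : (2 : ℤ) ^ (2 * n + 1) = 4 * 2 ^ (2 * n - 1) := by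
    have e : 2 * n + 1 = (2 * n - 1) + 2 := by omega
    rw [e, pow_add]; ring
  have hP : (2 : ℤ) ≤ 2 ^ (2 * n - 1) := by
    calc (2 : ℤ) = 2 ^ 1 := by norm_num
    _ ≤ 2 ^ (2 * n - 1) := pow_le_pow_right₀ (by norm_num) (by omega)
  linarith
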